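/- Let P be the set of points of the unit sphere of the real Hilbert space ℓ² all of whose coordinates are non-negative, with the intrinsic angular metric d(x,y) = arccos⟨x,y⟩. Then rad(P) = diam(P) = π/2. -/

import Mathlib

open scoped ENNReal RealInnerProductSpace
open Set Filter

noncomputable section

/-- A complete metric space is *CAT(1)* if any two points at distance `< π` have a
midpoint, and the spherical (curvature 1) midpoint comparison inequality holds for
triangles of perimeter `< 2π`. -/
def IsCAT1 (X : Type*) [MetricSpace X] : Prop :=
  CompleteSpace X ∧
  (∀ x y : X, dist x y < Real.pi →
      ∃ m : X, dist x m = dist x y / 2 ∧ dist y m = dist x y / 2) ∧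
  (∀ x y z m : X, dist x y < Real.pi →
      dist x m = dist x y / 2 → dist y m = dist x y / 2 →
      dist x z + dist y z + dist x y < 2 * Real.pi →
      (Real.cos (dist x z) + Real.cos (dist y z)) / 2 ≤
        Real.cos (dist z m) * Real.cos (dist x y / 2))

/-- `γ` is a (unit–speed, minimizing) geodesic on the interval `[a,b]`. -/
def IsGeodesicOn {X : Type*} [MetricSpace X] (γ : ℝ → X) (a b : ℝ) : Prop :=
  ∀ s ∈ Set.Icc a b, ∀ t ∈ Set.Icc a b, dist (γ s) (γ t) = |s - t|

/-- A subset of a CAT(1) space is convex if any two of its points at distance `< π`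
are joined by a geodesic inside the subset. -/
def IsConvexSet {X : Type*} [MetricSpace X] (C : Set X) : Prop :=
  ∀ x ∈ C, ∀ y ∈ C, dist x y < Real.pi →
    ∃ γ : ℝ → X, γ 0 = x ∧ γ (dist x y) = y ∧ IsGeodesicOn γ 0 (dist x y) ∧
      ∀ t ∈ Set.Icc 0 (dist x y), γ t ∈ C

/-- The closed convex hull of a subset: the intersection of all closed convex sets
containing it. -/
def ClosedConvexHull {X : Type*} [MetricSpace X] (A : Set X) : Set X :=
  ⋂₀ {C : Set X | A ⊆ C ∧ IsClosed C ∧ IsConvexSet C}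

/-- The (circum)radius `rad X = inf_x sup_y d(x,y)` of a metric space, as an
extended nonnegative real. -/
def eRad (X : Type*) [MetricSpace X] : ℝ≥0∞ :=
  ⨅ x : X, ⨆ y : X, edist x y

/-- The "positive orthant" of the unit sphere of the real Hilbert space `ℓ²`. -/
def posSphere : Set (lp (fun _ : ℕ => ℝ) 2) :=
  {x | ‖x‖ = 1 ∧ ∀ i : ℕ, 0 ≤ x i}

def eVec (n : ℕ) : lp (fun _ : ℕ => ℝ) 2 := lp.single 2 n 1

lemma eVec_mem (n : ℕ) : eVec n ∈ posSphere := by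
  constructor
  · have := lp.norm_single (p := 2) (E := fun _ : ℕ => ℝ) (by norm_num) n (1:ℝ)
    simpa [eVec] using this
  · intro i
    rcases eq_or_ne i n with h | h
    · subst h; simp [eVec, lp.single_apply_self]
    · simp [eVec, lp.single_apply_ne _ _ _ h, Pi.single_apply, h]

instance : Nonempty posSphere := ⟨⟨eVec 0, eVec_mem 0⟩⟩

lemma inner_nonneg (x y : posSphere) : 0 ≤ ⟪(x : lp (fun _ : ℕ => ℝ) 2), (y : lp (fun _ : ℕ => ℝ) 2)⟫ := by
  rw [lp.inner_eq_tsum]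
  exact tsum_nonneg fun i => mul_nonneg (y.2.2 i) (x.2.2 i)

lemma inner_eVec (x : posSphere) (n : ℕ) :
    ⟪(x : lp (fun _ : ℕ => ℝ) 2), eVec n⟫ = (x : lp (fun _ : ℕ => ℝ) 2) n := by
  have := lp.inner_single_right (𝕜 := ℝ) (G := fun _ : ℕ => ℝ) n (1:ℝ) x
  simpa [eVec] using this

lemma tendsto_coord (x : lp (fun _ : ℕ => ℝ) 2) :
    Tendsto (fun n => x n) atTop (nhds 0) := by
  have h : Summable (fun i => ‖x i‖ ^ (2:ℝ≥0∞).toReal) := (lp.memℓp x).summable (by norm_num)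
  have h2 := h.tendsto_atTop_zero
  have h3 : Tendsto (fun n => ‖x n‖) atTop (nhds 0) := by
    have := (Real.continuous_sqrt.tendsto 0).comp h2
    simp only [Function.comp] at this
    convert this using 2 with n
    · simp only [Function.comp, show (2:ℝ≥0∞).toReal = 2 by norm_num]
      rw [show ((2:ℝ)) = ((2:ℕ):ℝ) by norm_num, Real.rpow_natCast,
        Real.sqrt_sq_eq_abs, abs_of_nonneg (norm_nonneg _)]
    · simp
  simpa using tendsto_zero_iff_norm_tendsto_zero.mpr h3

lemma sup_eq (x : posSphere) :
    (⨆ y : posSphere,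
        Real.arccos ⟪(x : lp (fun _ : ℕ => ℝ) 2), (y : lp (fun _ : ℕ => ℝ) 2)⟫) =
      Real.pi / 2 := by
  apply le_antisymm
  · exact ciSup_le fun y => Real.arccos_le_pi_div_two.mpr (inner_nonneg x y)
  · have bdd : BddAbove (Set.range fun y : posSphere =>
        Real.arccos ⟪(x : lp (fun _ : ℕ => ℝ) 2), (y : lp (fun _ : ℕ => ℝ) 2)⟫) := by
      refine ⟨Real.pi, ?_⟩
      rintro _ ⟨y, rfl⟩
      exact Real.arccos_le_pi _
    have hle : ∀ n : ℕ, Real.arccos ((x : lp (fun _ : ℕ => ℝ) 2) n) ≤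
        ⨆ y : posSphere,
          Real.arccos ⟪(x : lp (fun _ : ℕ => ℝ) 2), (y : lp (fun _ : ℕ => ℝ) 2)⟫ := by
      intro n
      have := le_ciSup bdd (⟨eVec n, eVec_mem n⟩ : posSphere)
      rwa [show ((⟨eVec n, eVec_mem n⟩ : posSphere) : lp (fun _ : ℕ => ℝ) 2) = eVec n from rfl,
        inner_eVec x n] at this
    have ht : Tendsto (fun n => Real.arccos ((x : lp (fun _ : ℕ => ℝ) 2) n)) atTop
        (nhds (Real.pi / 2)) := by
      have := (Real.continuous_arccos.tendsto 0).comp (tendsto_coord x)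
      simpa [Function.comp_def, Real.arccos_zero] using this
    exact le_of_tendsto ht (Filter.Eventually.of_forall hle)

theorem statement6 :
    (⨅ x : posSphere, ⨆ y : posSphere,
        Real.arccos ⟪(x : lp (fun _ : ℕ => ℝ) 2), (y : lp (fun _ : ℕ => ℝ) 2)⟫) =
      Real.pi / 2 ∧
    (⨆ x : posSphere, ⨆ y : posSphere,
        Real.arccos ⟪(x : lp (fun _ : ℕ => ℝ) 2), (y : lp (fun _ : ℕ => ℝ) 2)⟫) =
      Real.pi / 2 := by
  simp only [sup_eq]
  exact ⟨ciInf_const, ciSup_const⟩
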